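/- arXiv:0802.1082 — 2 statements merged into one kernel-verified Lean document; each statement's English description precedes it below -/
import Mathlib

section
/- If r is a vector of norm 3 in an E-lattice L satisfying ⟨L,L⟩ ⊆ θE, then the map x ↦ x + (ω-1)·(⟨x,r⟩/3)·r is an isometry of L of order 3 fixing r^⊥ pointwise and multiplying r by ω. -/
noncomputable section

def ω : ℂ := -1/2 + (Real.sqrt 3 / 2) * Complex.I
def θ : ℂ := ω - (starRingEnd ℂ) ω
def Eis : Subring ℂ := Subring.closure {ω}

lemma hsq' : (Real.sqrt 3 : ℂ) * (Real.sqrt 3 : ℂ) = 3 := by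
  norm_cast
  rw [Real.mul_self_sqrt]; norm_num

lemma homega' : ω * ω = -ω - 1 := by
  unfold ω
  linear_combination (Complex.I^2/4) * hsq' + (3/4 : ℂ) * Complex.I_sq

lemma hconj' : (starRingEnd ℂ) ω = -1 - ω := by
  unfold ω
  simp only [map_add, map_mul, map_div₀, map_neg, map_one, map_ofNat,
    Complex.conj_I, Complex.conj_ofReal]
  ring

lemma hθω' : (ω - 1) * θ = 3 * (ω * ω) := by
  unfold θ
  rw [hconj']
  linear_combination -homega'

lemma homega_ne' : ω ≠ 1 := by
  intro h
  have h1 : ω.im = Real.sqrt 3 / 2 := by simp [ω]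
  have h2 : Real.sqrt 3 > 0 := Real.sqrt_pos.mpr (by norm_num)
  rw [h] at h1
  simp at h1
  linarith

lemma hωEis : ω ∈ Eis := Subring.subset_closure rfl

/-- If `r` is a norm-3 vector in an Eisenstein lattice `L` with `⟨L,L⟩ ⊆ θ·Eis`,
then `x ↦ x + (ω-1)(⟨x,r⟩/3)r` is an isometry of `L` of order 3 fixing `r^⊥`
pointwise and multiplying `r` by `ω`. -/
theorem stmt2 {V : Type*} [AddCommGroup V] [Module ℂ V]
    (B : V → V → ℂ)
    (hBadd : ∀ x y z : V, B (x + y) z = B x z + B y z)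
    (hBsmul : ∀ (c : ℂ) (x y : V), B (c • x) y = c * B x y)
    (hherm : ∀ x y : V, B y x = (starRingEnd ℂ) (B x y))
    (L : Set V)
    (hL0 : (0 : V) ∈ L)
    (hLadd : ∀ x ∈ L, ∀ y ∈ L, x + y ∈ L)
    (hLneg : ∀ x ∈ L, -x ∈ L)
    (hLω : ∀ x ∈ L, ω • x ∈ L)
    (hdiv : ∀ x ∈ L, ∀ y ∈ L, ∃ e ∈ Eis, B x y = θ * e)
    (r : V) (hr : r ∈ L) (hr3 : B r r = 3)
    (f : V → V) (hf : ∀ x, f x = x + ((ω - 1) * (B x r / 3)) • r) :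
    (∀ x ∈ L, f x ∈ L) ∧
    (∀ x y : V, B (f x) (f y) = B x y) ∧
    (∀ x, f (f (f x)) = x) ∧
    f ≠ id ∧
    (∀ x, B x r = 0 → f x = x) ∧
    f r = ω • r := by
  -- second-argument (conjugate) linearity
  have hBadd2 : ∀ x y z : V, B x (y + z) = B x y + B x z := by
    intro x y z
    rw [hherm (y + z) x, hBadd, map_add, ← hherm, ← hherm]
  have hBsmul2 : ∀ (c : ℂ) (x y : V), B x (c • y) = (starRingEnd ℂ) c * B x y := by
    intro c x y
    rw [hherm (c • y) x, hBsmul, map_mul, ← hherm]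
  -- f r = ω • r
  have hfr : f r = ω • r := by
    rw [hf, hr3]
    have : (ω - 1) * ((3 : ℂ) / 3) = ω - 1 := by norm_num
    rw [this, sub_smul, one_smul]
    abel
  -- scalar multiples by Eisenstein integers stay in L
  have hEsmul : ∀ e ∈ Eis, ∀ x ∈ L, e • x ∈ L := by
    intro e he
    induction he using Subring.closure_induction with
    | mem a ha =>
        intro x hx
        rcases ha with rfl
        exact hLω x hx
    | one => intro x hx; simpa using hx
    | zero => intro x hx; simpa using hL0
    | add a b _ _ iha ihb =>
        intro x hx
        rw [add_smul]
        exact hLadd _ (iha x hx) _ (ihb x hx)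
    | neg a _ iha =>
        intro x hx
        rw [neg_smul]
        exact hLneg _ (iha x hx)
    | mul a b _ _ iha ihb =>
        intro x hx
        rw [mul_smul]
        exact iha _ (ihb x hx)
  refine ⟨?_, ?_, ?_, ?_, ?_, hfr⟩
  · -- f maps L to L
    intro x hx
    obtain ⟨e, he, hBe⟩ := hdiv x hx r hr
    have hc : (ω - 1) * (B x r / 3) = (ω * ω * e) := by
      rw [hBe]
      linear_combination (e / 3) * hθω'
    rw [hf, hc]
    exact hLadd x hx _ (hEsmul _ (mul_mem (mul_mem hωEis hωEis) he) r hr)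
  · -- isometry
    intro x y
    rw [hf x, hf y, hBadd, hBadd2, hBadd2, hBsmul, hBsmul2, hBsmul2, hBsmul, hr3, hherm y r]
    simp only [map_mul, map_div₀, map_sub, map_one, map_ofNat, Complex.conj_conj, hconj']
    linear_combination (-(B x r * (starRingEnd ℂ) (B y r)) / 3) * homega'
  · -- order 3
    intro x
    set a := B x r with ha
    have e1 : f x = x + ((ω - 1) * (a / 3)) • r := hf x
    have e2 : B (f x) r = ω * a := by
      rw [e1, hBadd, hBsmul, hr3]; ring
    have e3 : f (f x) = x + ((ω - 1) * (a / 3) + (ω - 1) * (ω * a / 3)) • r := by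
      rw [hf (f x), e2, e1, add_smul, add_assoc]
    have e4 : B (f (f x)) r = ω * ω * a := by
      rw [e3, hBadd, hBsmul, hr3]; ring
    rw [hf (f (f x)), e4, e3, add_assoc, ← add_smul]
    have hz : (ω - 1) * (a / 3) + (ω - 1) * (ω * a / 3) + (ω - 1) * (ω * ω * a / 3) = 0 := by
      linear_combination ((ω - 1) * a / 3) * homega'
    rw [hz, zero_smul, add_zero]
  · -- f ≠ id
    intro h
    have h1 : f r = r := by rw [h]; rfl
    rw [hfr] at h1
    have h2 : (ω - 1) • r = 0 := by
      rw [sub_smul, one_smul, h1, sub_self]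
    have h3 : r = (0 : V) := by
      have hne : ω - 1 ≠ 0 := sub_ne_zero.mpr homega_ne'
      have := congrArg (fun v => (ω - 1)⁻¹ • v) h2
      simpa [smul_smul, inv_mul_cancel₀ hne] using this
    rw [h3] at hr3
    have h0 : B (0 : V) (0 : V) = 0 := by
      have := hBadd 0 0 0
      simpa using this.symm
    rw [h0] at hr3
    norm_num at hr3
  · -- fixes r-perp
    intro x hx
    rw [hf, hx]
    simp
end
end

section
/- Let C ⊆ 𝔽₃^13 be the 'line difference code': the span of all differences χ_ℓ - χ_m of characteristic functions of lines ℓ, m of the projective plane P²𝔽₃ (coordinates indexed by the 13 points). Then C is self-orthogonal and dim C = 6, hence dim C^⊥ = 7 and C^⊥ is spanned by the characteristic functions of lines. -/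
noncomputable section
open scoped Classical

/-- The projective plane `P²𝔽₃` (13 points; lines are also parametrized by this
type via the standard bilinear form). -/
abbrev P2F3 := Projectivization (ZMod 3) (Fin 3 → ZMod 3)

instance : Finite P2F3 := Quotient.finite _
noncomputable instance : Fintype P2F3 := Fintype.ofFinite P2F3

/-- Incidence: the line with coordinates `ℓ` passes through the point `p`. -/
def incid (ℓ p : P2F3) : Prop := ∑ i, ℓ.rep i * p.rep i = 0

/-- The characteristic function (in `𝔽₃^13`) of the line `ℓ`. -/
def chi (ℓ : P2F3) : P2F3 → ZMod 3 := fun p => if incid ℓ p then 1 else 0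

/-- The standard bilinear form on `𝔽₃^13`. -/
def dotP (x y : P2F3 → ZMod 3) : ZMod 3 := ∑ p, x p * y p

/-- The line difference code `C`: the span of the differences of characteristic
functions of lines. -/
def Cdiff : Submodule (ZMod 3) (P2F3 → ZMod 3) :=
  Submodule.span (ZMod 3) {v | ∃ ℓ m : P2F3, v = chi ℓ - chi m}

/-- The orthogonal complement `C^⊥`. -/
def CdiffPerp : Submodule (ZMod 3) (P2F3 → ZMod 3) where
  carrier := {y | ∀ x ∈ Cdiff, dotP x y = 0}
  zero_mem' := by intro x hx; simp [dotP]
  add_mem' := by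
    intro a b ha hb x hx
    have : dotP x (a + b) = dotP x a + dotP x b := by
      simp [dotP, mul_add, Finset.sum_add_distrib]
    simp only [Set.mem_setOf_eq] at ha hb ⊢
    rw [this, ha x hx, hb x hx, add_zero]
  smul_mem' := by
    intro c y hy x hx
    have : dotP x (c • y) = c * dotP x y := by
      simp [dotP, Finset.mul_sum]; ring_nf
      exact Finset.sum_congr rfl fun p _ => by ring
    simp only [Set.mem_setOf_eq] at hy ⊢
    rw [this, hy x hx, mul_zero]

namespace Stmt14Aux

def reps : Fin 13 → Fin 3 → ZMod 3 :=
  ![![1,0,0],![1,0,1],![1,0,2],![1,1,0],![1,1,1],![1,1,2],![1,2,0],![1,2,1],![1,2,2],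
    ![0,1,0],![0,1,1],![0,1,2],![0,0,1]]

def Mt (i j : Fin 13) : ZMod 3 := ∑ k, reps i k * reps j k

def chirow (i : Fin 13) : Fin 13 → ZMod 3 := fun j => if Mt i j = 0 then 1 else 0

lemma hreps_ne : ∀ i, reps i ≠ 0 := by decide

lemma hsurj' : ∀ v : Fin 3 → ZMod 3, v ≠ 0 → ∃ i, ∃ a : ZMod 3, a • reps i = v := by decide

lemma hinj' : ∀ i j : Fin 13, (∃ a : ZMod 3, a • reps j = reps i) → i = j := by decide

def e (i : Fin 13) : P2F3 := Projectivization.mk (ZMod 3) (reps i) (hreps_ne i)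

lemma einj : Function.Injective e := by
  intro i j h
  rw [e, e, Projectivization.mk_eq_mk_iff'] at h
  exact hinj' i j h

lemma esurj : Function.Surjective e := by
  intro p
  obtain ⟨i, a, hav⟩ := hsurj' p.rep p.rep_nonzero
  refine ⟨i, ?_⟩
  have : Projectivization.mk (ZMod 3) p.rep p.rep_nonzero = e i :=
    (Projectivization.mk_eq_mk_iff' (ZMod 3) _ _ _ _).mpr ⟨a, hav⟩
  rw [← this, Projectivization.mk_rep]

def eEquiv : Fin 13 ≃ P2F3 := Equiv.ofBijective e ⟨einj, esurj⟩

lemma rep_e (i : Fin 13) : ∃ a : ZMod 3, a ≠ 0 ∧ (e i).rep = a • reps i := by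
  have h : Projectivization.mk (ZMod 3) (e i).rep (e i).rep_nonzero
      = Projectivization.mk (ZMod 3) (reps i) (hreps_ne i) := by
    rw [Projectivization.mk_rep]; rfl
  rw [Projectivization.mk_eq_mk_iff'] at h
  obtain ⟨a, ha⟩ := h
  refine ⟨a, fun h0 => ?_, ha.symm⟩
  rw [h0, zero_smul] at ha
  exact (e i).rep_nonzero ha.symm

lemma incid_e (i j : Fin 13) : incid (e i) (e j) ↔ Mt i j = 0 := by
  obtain ⟨a, ha0, ha⟩ := rep_e i
  obtain ⟨b, hb0, hb⟩ := rep_e j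
  unfold incid
  have key : (∑ k, (e i).rep k * (e j).rep k) = (a * b) * Mt i j := by
    rw [Mt, Finset.mul_sum]
    refine Finset.sum_congr rfl fun k _ => ?_
    rw [ha, hb]; simp [Pi.smul_apply, smul_eq_mul]; ring
  rw [key, mul_eq_zero, mul_eq_zero]
  simp [ha0, hb0]

lemma chi_e (i j : Fin 13) : chi (e i) (e j) = chirow i j := by
  unfold chi chirow
  exact if_congr (incid_e i j) rfl rfl

end Stmt14Aux

namespace Stmt14Aux

-- orthogonality of chi rows
lemma chirow_dot : ∀ i j : Fin 13, (∑ k, chirow i k * chirow j k) = 1 := by decide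

def φ : (P2F3 → ZMod 3) ≃ₗ[ZMod 3] (Fin 13 → ZMod 3) :=
  LinearEquiv.funCongrLeft (ZMod 3) (ZMod 3) eEquiv

lemma φ_apply (f : P2F3 → ZMod 3) (i : Fin 13) : φ f i = f (e i) := rfl

lemma φ_chi (i : Fin 13) : φ (chi (e i)) = chirow i := funext fun j => chi_e i j

lemma φ_symm_chirow (i : Fin 13) : φ.symm (chirow i) = chi (e i) := by
  rw [← φ_chi, LinearEquiv.symm_apply_apply]

-- sum reindexing
lemma sum_reindex (f : P2F3 → ZMod 3) : (∑ p, f p) = ∑ i, f (e i) :=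
  (Fintype.sum_bijective e ⟨einj, esurj⟩ _ f fun _ => rfl).symm

lemma dot_chi (ℓ m : P2F3) : dotP (chi ℓ) (chi m) = 1 := by
  obtain ⟨i, rfl⟩ := esurj ℓ
  obtain ⟨j, rfl⟩ := esurj m
  rw [dotP, sum_reindex fun p => chi (e i) p * chi (e j) p]
  simp only [chi_e]
  exact chirow_dot i j

-- dotP linearity lemmas
lemma dotP_add_left (x y z : P2F3 → ZMod 3) : dotP (x + y) z = dotP x z + dotP y z := by
  simp [dotP, add_mul, Finset.sum_add_distrib]

lemma dotP_sub_left (x y z : P2F3 → ZMod 3) : dotP (x - y) z = dotP x z - dotP y z := by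
  simp [dotP, sub_mul, Finset.sum_sub_distrib]

lemma dotP_smul_left (c : ZMod 3) (x z : P2F3 → ZMod 3) : dotP (c • x) z = c * dotP x z := by
  simp [dotP, Finset.mul_sum, mul_assoc]

lemma dotP_zero_left (z : P2F3 → ZMod 3) : dotP 0 z = 0 := by simp [dotP]

lemma dotP_add_right (x y z : P2F3 → ZMod 3) : dotP z (x + y) = dotP z x + dotP z y := by
  simp [dotP, mul_add, Finset.sum_add_distrib]

lemma dotP_smul_right (c : ZMod 3) (x z : P2F3 → ZMod 3) : dotP z (c • x) = c * dotP z x := by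
  simp [dotP, Finset.mul_sum]
  exact Finset.sum_congr rfl fun p _ => by ring

end Stmt14Aux

namespace Stmt14Aux

def u6 : Fin 6 → Fin 13 → ZMod 3 :=
  ![![1,0,0,0,0,1,0,1,0,2,2,0,2],
    ![0,1,0,0,0,1,0,2,2,0,1,0,2],
    ![0,0,1,0,0,1,0,0,1,0,2,2,2],
    ![0,0,0,1,0,2,0,1,2,2,1,0,0],
    ![0,0,0,0,1,2,0,2,1,0,1,2,0],
    ![0,0,0,0,0,0,1,1,1,2,2,2,0]]

def p6 : Fin 6 → Fin 13 := ![0,1,2,3,4,6]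

def comb6 : Fin 6 → Fin 13 → ZMod 3 :=
  ![![0,0,1,0,2,1,0,0,0,1,0,0,0],
    ![0,2,2,0,1,2,0,0,0,0,0,0,0],
    ![0,1,0,0,0,0,0,0,0,0,0,0,0],
    ![0,2,1,0,1,2,1,0,0,0,0,0,0],
    ![0,1,2,0,2,1,0,0,0,0,0,0,0],
    ![0,1,1,0,2,2,0,0,0,0,0,0,0]]

def u7 : Fin 7 → Fin 13 → ZMod 3 :=
  ![![1,0,0,0,0,1,0,1,0,0,0,1,0],
    ![0,1,0,0,0,1,0,2,2,0,1,0,2],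
    ![0,0,1,0,0,1,0,0,1,0,2,2,2],
    ![0,0,0,1,0,2,0,1,2,0,2,1,1],
    ![0,0,0,0,1,2,0,2,1,0,1,2,0],
    ![0,0,0,0,0,0,1,1,1,0,0,0,1],
    ![0,0,0,0,0,0,0,0,0,1,1,1,1]]

def p7 : Fin 7 → Fin 13 := ![0,1,2,3,4,6,9]

def comb7 : Fin 7 → Fin 13 → ZMod 3 :=
  ![![0,1,2,2,1,0,0,0,0,1,0,0,0],
    ![0,0,0,2,0,1,0,0,0,0,0,0,0],
    ![0,2,1,2,2,2,0,0,0,0,0,0,0],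
    ![0,2,1,0,1,2,1,0,0,0,0,0,0],
    ![0,1,2,0,2,1,0,0,0,0,0,0,0],
    ![0,0,0,1,0,0,0,0,0,0,0,0,0],
    ![0,2,2,1,1,1,0,0,0,0,0,0,0]]

-- pivot identities
lemma u6_pivot : ∀ i j : Fin 6, u6 i (p6 j) = if i = j then 1 else 0 := by decide
lemma u7_pivot : ∀ i j : Fin 7, u7 i (p7 j) = if i = j then 1 else 0 := by decide

-- each dv i in span u6 with explicit coefficients
lemma dv_in_u6 : ∀ i : Fin 13,
    chirow i - chirow 0 = ∑ j, (chirow i (p6 j) - chirow 0 (p6 j)) • u6 j := by decide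

-- each u6 j a combo of dv's
lemma u6_in_dv : ∀ j : Fin 6, u6 j = ∑ k, comb6 j k • (chirow k - chirow 0) := by decide

-- each u7 j a combo of chi rows
lemma u7_in_chi : ∀ j : Fin 7, u7 j = ∑ k, comb7 j k • chirow k := by decide

-- generic pivot independence lemma
lemma indep_of_pivot {n N : ℕ} (v : Fin n → Fin N → ZMod 3) (p : Fin n → Fin N)
    (h : ∀ i j, v i (p j) = if i = j then 1 else 0) : LinearIndependent (ZMod 3) v := by
  rw [Fintype.linearIndependent_iff]
  intro g hg j
  have hj := congrFun hg (p j)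
  simpa [Finset.sum_apply, h, mul_ite, Finset.sum_ite_eq'] using hj

lemma u6_indep : LinearIndependent (ZMod 3) u6 := indep_of_pivot u6 p6 u6_pivot
lemma u7_indep : LinearIndependent (ZMod 3) u7 := indep_of_pivot u7 p7 u7_pivot

end Stmt14Aux

namespace Stmt14Aux

open Submodule

def Sdiff : Set (P2F3 → ZMod 3) := {v | ∃ ℓ m : P2F3, v = chi ℓ - chi m}
def Schi : Set (P2F3 → ZMod 3) := {v | ∃ ℓ : P2F3, v = chi ℓ}

lemma dv_mem_u6 (i : Fin 13) :
    chirow i - chirow 0 ∈ span (ZMod 3) (Set.range u6) := by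
  rw [dv_in_u6 i]
  exact sum_mem fun j _ => smul_mem _ _ (subset_span ⟨j, rfl⟩)

lemma map_Cdiff : Submodule.map (φ : (P2F3 → ZMod 3) →ₗ[ZMod 3] _) Cdiff
    = span (ZMod 3) (Set.range u6) := by
  rw [Cdiff, Submodule.map_span]
  apply le_antisymm
  · rw [span_le]
    rintro _ ⟨v, ⟨ℓ, m, rfl⟩, rfl⟩
    obtain ⟨i, rfl⟩ := esurj ℓ
    obtain ⟨j, rfl⟩ := esurj m
    have : (φ : (P2F3 → ZMod 3) →ₗ[ZMod 3] _) (chi (e i) - chi (e j))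
        = (chirow i - chirow 0) - (chirow j - chirow 0) := by
      rw [map_sub]
      simp only [LinearEquiv.coe_coe, φ_chi]
      abel
    rw [this]
    exact sub_mem (dv_mem_u6 i) (dv_mem_u6 j)
  · rw [span_le]
    rintro _ ⟨j, rfl⟩
    rw [u6_in_dv j]
    refine sum_mem fun k _ => smul_mem _ _ (subset_span ?_)
    refine ⟨chi (e k) - chi (e 0), ⟨e k, e 0, rfl⟩, ?_⟩
    rw [map_sub]
    simp only [LinearEquiv.coe_coe, φ_chi]

lemma finrank_Cdiff : Module.finrank (ZMod 3) Cdiff = 6 := by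
  have h := LinearEquiv.finrank_map_eq φ Cdiff
  rw [map_Cdiff] at h
  rw [← h, finrank_span_eq_card u6_indep, Fintype.card_fin]

def w6 (j : Fin 6) : P2F3 → ZMod 3 := φ.symm (u6 j)

lemma Cdiff_eq_span_w6 : Cdiff = span (ZMod 3) (Set.range w6) := by
  have h2 : Submodule.map (φ.symm : (Fin 13 → ZMod 3) →ₗ[ZMod 3] (P2F3 → ZMod 3))
      (Submodule.map (φ : (P2F3 → ZMod 3) →ₗ[ZMod 3] (Fin 13 → ZMod 3)) Cdiff) = Cdiff := by
    ext v
    simp [Submodule.mem_map]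
  rw [← h2, map_Cdiff, Submodule.map_span, ← Set.range_comp]
  rfl

def T : (P2F3 → ZMod 3) →ₗ[ZMod 3] (Fin 6 → ZMod 3) where
  toFun y := fun i => dotP (w6 i) y
  map_add' x y := funext fun i => dotP_add_right x y (w6 i)
  map_smul' c y := funext fun i => dotP_smul_right c y (w6 i)

lemma mem_CdiffPerp (y : P2F3 → ZMod 3) : y ∈ CdiffPerp ↔ ∀ x ∈ Cdiff, dotP x y = 0 :=
  Iff.rfl

lemma CdiffPerp_eq_ker : CdiffPerp = LinearMap.ker T := by
  ext y
  rw [mem_CdiffPerp, LinearMap.mem_ker]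
  constructor
  · intro hy
    funext i
    exact hy (w6 i) (by rw [Cdiff_eq_span_w6]; exact subset_span ⟨i, rfl⟩)
  · intro hy x hx
    rw [Cdiff_eq_span_w6] at hx
    induction hx using span_induction with
    | mem z hz => obtain ⟨i, rfl⟩ := hz; exact congrFun hy i
    | zero => exact dotP_zero_left y
    | add a b _ _ ha hb => rw [dotP_add_left, ha, hb, add_zero]
    | smul c a _ ha => rw [dotP_smul_left, ha, mul_zero]

lemma w6_apply_e (i : Fin 6) (k : Fin 13) : w6 i (e k) = u6 i k := by
  have : φ (w6 i) = u6 i := by rw [w6, LinearEquiv.apply_symm_apply]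
  rw [← this]; rfl

lemma T_surj : LinearMap.range T = ⊤ := by
  rw [eq_top_iff, ← (Pi.basisFun (ZMod 3) (Fin 6)).span_eq, span_le]
  rintro _ ⟨j, rfl⟩
  rw [Pi.basisFun_apply]
  refine ⟨φ.symm (Pi.single (p6 j) 1), ?_⟩
  funext i
  show dotP (w6 i) (φ.symm (Pi.single (p6 j) 1)) = (Pi.single j (1 : ZMod 3) : Fin 6 → ZMod 3) i
  have hval : ∀ k : Fin 13, (φ.symm (Pi.single (p6 j) (1 : ZMod 3))) (e k)
      = (Pi.single (p6 j) (1 : ZMod 3) : Fin 13 → ZMod 3) k := by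
    intro k
    have : φ (φ.symm (Pi.single (p6 j) (1 : ZMod 3))) = Pi.single (p6 j) 1 :=
      φ.apply_symm_apply _
    exact congrFun this k
  rw [dotP, sum_reindex fun p => w6 i p * (φ.symm (Pi.single (p6 j) 1)) p]
  simp only [w6_apply_e, hval]
  have hsum : (∑ k, u6 i k * (Pi.single (p6 j) (1 : ZMod 3) : Fin 13 → ZMod 3) k)
      = u6 i (p6 j) := by
    rw [Finset.sum_eq_single (p6 j)]
    · rw [Pi.single_eq_same, mul_one]
    · intro b _ hb; rw [Pi.single_eq_of_ne hb, mul_zero]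
    · intro h; exact absurd (Finset.mem_univ _) h
  rw [hsum, u6_pivot, Pi.single_apply]

lemma card_P2F3 : Fintype.card P2F3 = 13 := by
  rw [← Fintype.card_congr eEquiv, Fintype.card_fin]

lemma finrank_CdiffPerp : Module.finrank (ZMod 3) CdiffPerp = 7 := by
  have h := LinearMap.finrank_range_add_finrank_ker T
  rw [T_surj, finrank_top, Module.finrank_fintype_fun_eq_card, Fintype.card_fin,
    Module.finrank_fintype_fun_eq_card, card_P2F3] at h
  rw [CdiffPerp_eq_ker]
  omega

end Stmt14Aux

namespace Stmt14Aux

open Submodule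

def w7 (j : Fin 7) : P2F3 → ZMod 3 := φ.symm (u7 j)

lemma w7_mem (j : Fin 7) : w7 j ∈ span (ZMod 3) Schi := by
  have : w7 j = ∑ k, comb7 j k • chi (e k) := by
    rw [w7, u7_in_chi j, map_sum]
    refine Finset.sum_congr rfl fun k _ => ?_
    rw [map_smul, φ_symm_chirow]
  rw [this]
  exact sum_mem fun k _ => smul_mem _ _ (subset_span ⟨e k, rfl⟩)

lemma w7_indep : LinearIndependent (ZMod 3) w7 :=
  u7_indep.map' (φ.symm : (Fin 13 → ZMod 3) →ₗ[ZMod 3] (P2F3 → ZMod 3)) (LinearEquiv.ker _)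

lemma chi_mem_perp (ℓ : P2F3) : chi ℓ ∈ CdiffPerp := by
  rw [mem_CdiffPerp]
  intro x hx
  rw [Cdiff] at hx
  induction hx using span_induction with
  | mem z hz =>
    obtain ⟨a, b, rfl⟩ := hz
    rw [dotP_sub_left, dot_chi, dot_chi, sub_self]
  | zero => exact dotP_zero_left _
  | add a b _ _ ha hb => rw [dotP_add_left, ha, hb, add_zero]
  | smul c a _ ha => rw [dotP_smul_left, ha, mul_zero]

lemma span_Schi_le : span (ZMod 3) Schi ≤ CdiffPerp := by
  rw [span_le]
  rintro _ ⟨ℓ, rfl⟩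
  exact chi_mem_perp ℓ

lemma span_Schi_eq : span (ZMod 3) Schi = CdiffPerp := by
  refine Submodule.eq_of_le_of_finrank_le span_Schi_le ?_
  rw [finrank_CdiffPerp]
  have h1 : Module.finrank (ZMod 3) (span (ZMod 3) (Set.range w7)) = 7 := by
    rw [finrank_span_eq_card w7_indep, Fintype.card_fin]
  have h2 : span (ZMod 3) (Set.range w7) ≤ span (ZMod 3) Schi := by
    rw [span_le]; rintro _ ⟨j, rfl⟩; exact w7_mem j
  calc (7 : ℕ) = _ := h1.symm
    _ ≤ _ := Submodule.finrank_mono h2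

lemma Cdiff_le_perp : Cdiff ≤ CdiffPerp := by
  rw [← span_Schi_eq, Cdiff, span_le]
  rintro _ ⟨ℓ, m, rfl⟩
  exact sub_mem (subset_span ⟨ℓ, rfl⟩) (subset_span ⟨m, rfl⟩)

end Stmt14Aux

/-- `C` is self-orthogonal of dimension 6, so `C^⊥` has dimension 7, and `C^⊥` is
spanned by the characteristic functions of the lines. -/
theorem stmt14 :
    (∀ x ∈ Cdiff, ∀ y ∈ Cdiff, dotP x y = 0) ∧
    Module.finrank (ZMod 3) Cdiff = 6 ∧
    Module.finrank (ZMod 3) CdiffPerp = 7 ∧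
    CdiffPerp = Submodule.span (ZMod 3) {v | ∃ ℓ : P2F3, v = chi ℓ} := by
  refine ⟨?_, Stmt14Aux.finrank_Cdiff, Stmt14Aux.finrank_CdiffPerp,
    Stmt14Aux.span_Schi_eq.symm⟩
  intro x hx y hy
  exact (Stmt14Aux.mem_CdiffPerp y).mp (Stmt14Aux.Cdiff_le_perp hy) x hx
end
end
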